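/- Let w and N be positive integers with 2w ≤ N and N ≤ 4w³ (say), and let p(x,y) be a real bivariate polynomial of total degree d such that (1) p(2w, 2w) ≥ 2, and (2) 0 ≤ p(x,y) ≤ 1 for all integer points (x,y) with either (x,y) ∈ [2w,N]×[0,w] or (x,y) ∈ [0,w]×[2w,N]. Then d ≥ c·min{sqrt(w), sqrt(N/w)} for some absolute constant c > 0. -/

import Mathlib

open Polynomial Real Set

noncomputable def cheb : ℕ → Polynomial ℝ
  | 0 => 1
  | 1 => Polynomial.X
  | n + 2 => 2 * Polynomial.X * cheb (n+1) - cheb n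

lemma cheb_eval_cos (n : ℕ) (θ : ℝ) : (cheb n).eval (Real.cos θ) = Real.cos (n * θ) := by
  induction n using cheb.induct with
  | case1 => simp [cheb]
  | case2 => simp [cheb]
  | case3 n ih1 ih2 =>
    have key : Real.cos ((n+2) * θ) = 2 * Real.cos θ * Real.cos ((n+1)*θ) - Real.cos (n*θ) := by
      have h1 := Real.cos_add ((n+1)*θ) θ
      have h2 := Real.cos_sub ((n+1)*θ) θ
      have e1 : ((n:ℝ)+1)*θ + θ = ((n:ℝ)+2)*θ := by ring
      have e2 : ((n:ℝ)+1)*θ - θ = (n:ℝ)*θ := by ring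
      rw [e1] at h1; rw [e2] at h2; linarith
    push_cast
    simp only [cheb, Polynomial.eval_sub, Polynomial.eval_mul, Polynomial.eval_ofNat,
      Polynomial.eval_X]
    push_cast at ih1 ih2
    rw [ih1, ih2]
    push_cast at key
    have e3 : ((n:ℝ) + 1 + 1) = (n:ℝ) + 2 := by ring
    rw [e3]
    linarith

lemma cheb_natDegree_le (n : ℕ) : (cheb n).natDegree ≤ n := by
  induction n using cheb.induct with
  | case1 => simp [cheb]
  | case2 => simp [cheb]
  | case3 n ih1 ih2 =>
    show (2 * Polynomial.X * cheb (n+1) - cheb n).natDegree ≤ n + 2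
    refine le_trans (Polynomial.natDegree_sub_le _ _) ?_
    simp only [max_le_iff]
    constructor
    · refine le_trans (Polynomial.natDegree_mul_le) ?_
      have : (2 * Polynomial.X : Polynomial ℝ).natDegree ≤ 1 := by
        refine le_trans (Polynomial.natDegree_mul_le) ?_
        simp
      omega
    · omega

lemma cheb_eval_one (n : ℕ) : (cheb n).eval 1 = 1 := by
  have := cheb_eval_cos n 0
  simpa using this

lemma cheb_deriv_one (n : ℕ) : (Polynomial.derivative (cheb n)).eval 1 = n^2 := by
  induction n using cheb.induct with
  | case1 => simp [cheb]
  | case2 => simp [cheb]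
  | case3 n ih1 ih2 =>
    show (Polynomial.derivative (2 * Polynomial.X * cheb (n+1) - cheb n)).eval 1 = _
    simp only [Polynomial.derivative_sub, Polynomial.derivative_mul, Polynomial.derivative_ofNat,
      Polynomial.derivative_X, Polynomial.eval_sub, Polynomial.eval_add, Polynomial.eval_mul,
      Polynomial.eval_ofNat, Polynomial.eval_X, Polynomial.eval_one,
      Polynomial.eval_zero] at *
    rw [cheb_eval_one] at *
    push_cast
    push_cast at ih1 ih2
    nlinarith [ih1, ih2]


lemma markov_core (n : ℕ) (hn : 1 ≤ n) (q : Polynomial ℝ) (hq : q.natDegree ≤ n) (S : ℝ)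
    (hS : ∀ x ∈ Set.Icc (-1:ℝ) 1, |q.eval x| ≤ S) :
    (Polynomial.derivative q).eval 1 ≤ n^2 * S := by
  by_contra hcon
  push_neg at hcon
  have hS0 : 0 ≤ S := le_trans (abs_nonneg _) (hS 1 ⟨by norm_num, le_refl 1⟩)
  have hn2 : (0:ℝ) < (n:ℝ)^2 := by positivity
  set l : ℝ := (Polynomial.derivative q).eval 1 / (n^2) with hl
  have hlS : S < l := by
    rw [hl, lt_div_iff₀ hn2]
    linarith [hcon]
  have hl0 : 0 < l := lt_of_le_of_lt hS0 hlS
  set Q : Polynomial ℝ := Polynomial.C l * cheb n - q with hQdef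
  -- the extremal points
  set x : ℕ → ℝ := fun k => Real.cos (k * π / n) with hx
  have hxmem : ∀ k, x k ∈ Set.Icc (-1:ℝ) 1 := fun k => ⟨Real.neg_one_le_cos _, Real.cos_le_one _⟩
  have hxval : ∀ k, (cheb n).eval (x k) = (-1:ℝ)^k := by
    intro k
    rw [hx]
    simp only []
    rw [cheb_eval_cos n (k * π / n)]
    have hn0 : (n:ℝ) ≠ 0 := by positivity
    have : (n:ℝ) * (k * π / n) = k * π := by field_simp
    rw [this]
    have := Real.cos_nat_mul_pi_sub 0 k
    simpa using this
  have hQx : ∀ k, Q.eval (x k) = l * (-1:ℝ)^k - q.eval (x k) := by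
    intro k; rw [hQdef]; simp [hxval k]
  have hsgn : ∀ k, (Even k → 0 < Q.eval (x k)) ∧ (Odd k → Q.eval (x k) < 0) := by
    intro k
    have hb := hS (x k) (hxmem k)
    have hb1 := abs_le.1 hb
    constructor
    · intro he
      rw [hQx k, he.neg_one_pow]
      linarith [hb1.2]
    · intro ho
      rw [hQx k, ho.neg_one_pow]
      linarith [hb1.1]
  have hxanti : ∀ j k, j < k → k ≤ n → x k < x j := by
    intro j k hjk hkn
    have hπ : 0 < π := Real.pi_pos
    have hn0 : (0:ℝ) < n := by positivity
    apply Real.strictAntiOn_cos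
    · constructor
      · positivity
      · rw [div_le_iff₀ hn0]
        have : (j:ℝ) ≤ n := by exact_mod_cast le_trans (le_of_lt hjk) hkn
        nlinarith
    · constructor
      · positivity
      · rw [div_le_iff₀ hn0]
        have : (k:ℝ) ≤ n := by exact_mod_cast hkn
        nlinarith
    · have h1 : (j:ℝ) < k := by exact_mod_cast hjk
      have hπ2 : 0 < π := Real.pi_pos
      apply div_lt_div_of_pos_right ?_ hn0
      nlinarith
  have hQc : Continuous fun t : ℝ => Q.eval t := Q.continuous
  have hx0 : x 0 = 1 := by rw [hx]; norm_num
  -- roots of Q between consecutive extremal points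
  have hz : ∀ k, 1 ≤ k → k ≤ n → ∃ z, z ∈ Set.Ioo (x k) (x (k-1)) ∧ Q.eval z = 0 := by
    intro k h1 h2
    have hlt : x k < x (k-1) := hxanti (k-1) k (by omega) h2
    rcases Nat.even_or_odd k with he | ho
    · have hodd : Odd (k-1) := Nat.Even.sub_odd h1 he odd_one
      have hpos := (hsgn k).1 he
      have hneg := (hsgn (k-1)).2 hodd
      have hsub := intermediate_value_Ioo' (le_of_lt hlt) hQc.continuousOn
      have h0mem : (0:ℝ) ∈ Set.Ioo (Q.eval (x (k-1))) (Q.eval (x k)) := ⟨hneg, hpos⟩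
      obtain ⟨z, hz1, hz2⟩ := hsub h0mem
      exact ⟨z, hz1, hz2⟩
    · have heven : Even (k-1) := Nat.Odd.sub_odd ho odd_one
      have hneg := (hsgn k).2 ho
      have hpos := (hsgn (k-1)).1 heven
      have hsub := intermediate_value_Ioo (le_of_lt hlt) hQc.continuousOn
      have h0mem : (0:ℝ) ∈ Set.Ioo (Q.eval (x k)) (Q.eval (x (k-1))) := ⟨hneg, hpos⟩
      obtain ⟨z, hz1, hz2⟩ := hsub h0mem
      exact ⟨z, hz1, hz2⟩
  have hz' : ∀ k : ℕ, ∃ z : ℝ, 1 ≤ k → k ≤ n → (z ∈ Set.Ioo (x k) (x (k-1)) ∧ Q.eval z = 0) := by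
    intro k
    by_cases h : 1 ≤ k ∧ k ≤ n
    · obtain ⟨z, h1, h2⟩ := hz k h.1 h.2
      exact ⟨z, fun _ _ => ⟨h1, h2⟩⟩
    · exact ⟨0, fun h1 h2 => absurd ⟨h1, h2⟩ h⟩
  choose Z hZ using hz'
  have hZanti : ∀ j k, 1 ≤ j → j < k → k ≤ n → Z k < Z j := by
    intro j k h1 h2 h3
    have hk := hZ k (by omega) h3
    have hj := hZ j h1 (by omega)
    have hxx : x (k-1) ≤ x j := by
      rcases Nat.lt_or_ge j (k-1) with h | h
      · exact le_of_lt (hxanti j (k-1) h (by omega))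
      · have : j = k - 1 := by omega
        rw [this]
    calc Z k < x (k-1) := hk.1.2
    _ ≤ x j := hxx
    _ < Z j := hj.1.1
  -- Rolle roots of Q'
  have hyex : ∀ k : ℕ, ∃ y : ℝ, 1 ≤ k → k + 1 ≤ n →
      (y ∈ Set.Ioo (Z (k+1)) (Z k) ∧ (Polynomial.derivative Q).eval y = 0) := by
    intro k
    by_cases h : 1 ≤ k ∧ k + 1 ≤ n
    · have hk1 := hZ (k+1) (by omega) h.2
      have hk := hZ k h.1 (by omega)
      have hlt : Z (k+1) < Z k := hZanti k (k+1) h.1 (by omega) h.2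
      have heq : Q.eval (Z (k+1)) = Q.eval (Z k) := by rw [hk1.2, hk.2]
      obtain ⟨c, hc1, hc2⟩ := exists_deriv_eq_zero hlt hQc.continuousOn heq
      rw [Polynomial.deriv] at hc2
      exact ⟨c, fun _ _ => ⟨hc1, hc2⟩⟩
    · exact ⟨0, fun h1 h2 => absurd ⟨h1, h2⟩ h⟩
  choose Y hY using hyex
  -- Q' vanishes at 1
  have hln2 : l * (n:ℝ)^2 = (Polynomial.derivative q).eval 1 := by
    rw [hl]; field_simp
  have hQ'1 : (Polynomial.derivative Q).eval 1 = 0 := by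
    rw [hQdef]
    simp only [Polynomial.derivative_sub, Polynomial.derivative_mul, Polynomial.derivative_C,
      Polynomial.eval_sub, Polynomial.eval_add, Polynomial.eval_mul, Polynomial.eval_C,
      Polynomial.eval_zero, zero_mul, zero_add, cheb_deriv_one]
    push_cast
    linarith [hln2]
  by_cases hD : Polynomial.derivative Q = 0
  · have hc := Polynomial.eq_C_of_derivative_eq_zero hD
    have h0 := (hsgn 0).1 ⟨0, rfl⟩
    have h1s := (hsgn 1).2 odd_one
    rw [hc] at h0 h1s
    simp at h0 h1s
    linarith
  · set F : Finset ℝ := ((Finset.Icc 1 (n-1)).image Y) ∪ {1} with hF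
    have hY1 : ∀ k, 1 ≤ k → k ≤ n-1 → Y k < 1 := by
      intro k h1 h2
      have hyk := hY k h1 (by omega)
      have hzk := hZ k h1 (by omega)
      have hx1 : x (k-1) ≤ 1 := by
        rcases Nat.eq_zero_or_pos (k-1) with h | h
        · rw [h, hx0]
        · rw [← hx0]; exact le_of_lt (hxanti 0 (k-1) h (by omega))
      calc Y k < Z k := hyk.1.2
      _ < x (k-1) := hzk.1.2
      _ ≤ 1 := hx1
    have hYanti : ∀ j k, 1 ≤ j → j < k → k ≤ n-1 → Y k < Y j := by
      intro j k h1 h2 h3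
      have hyk := hY k (by omega) (by omega)
      have hyj := hY j h1 (by omega)
      have hZZ : Z k ≤ Z (j+1) := by
        rcases Nat.lt_or_ge (j+1) k with h | h
        · exact le_of_lt (hZanti (j+1) k (by omega) h (by omega))
        · have : j + 1 = k := by omega
          rw [this]
      calc Y k < Z k := hyk.1.2
      _ ≤ Z (j+1) := hZZ
      _ < Y j := hyj.1.1
    have hmemroots : ∀ a ∈ F, a ∈ (Polynomial.derivative Q).roots := by
      intro a ha
      rw [hF, Finset.mem_union] at ha
      rw [Polynomial.mem_roots hD]
      rcases ha with ha | ha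
      · obtain ⟨k, hk, hka⟩ := Finset.mem_image.1 ha
        rw [Finset.mem_Icc] at hk
        have := (hY k hk.1 (by omega)).2
        rw [hka] at this
        exact this
      · rw [Finset.mem_singleton] at ha
        rw [ha]
        exact hQ'1
    have hinj : Set.InjOn Y (Finset.Icc 1 (n-1)) := by
      intro a ha b hb hab
      simp only [Finset.coe_Icc, Set.mem_Icc] at ha hb
      rcases lt_trichotomy a b with h | h | h
      · exact absurd hab (ne_of_gt (hYanti a b ha.1 h hb.2))
      · exact h
      · exact absurd hab (ne_of_lt (hYanti b a hb.1 h ha.2))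
    have hcard_im : ((Finset.Icc 1 (n-1)).image Y).card = n - 1 := by
      rw [Finset.card_image_of_injOn (by simpa using hinj), Nat.card_Icc]
      omega
    have h1notin : (1:ℝ) ∉ (Finset.Icc 1 (n-1)).image Y := by
      intro hmem
      obtain ⟨k, hk, hka⟩ := Finset.mem_image.1 hmem
      rw [Finset.mem_Icc] at hk
      exact absurd hka (ne_of_lt (hY1 k hk.1 hk.2))
    have hFcard : F.card = n := by
      rw [hF, Finset.card_union_of_disjoint (Finset.disjoint_singleton_right.2 h1notin),
        hcard_im, Finset.card_singleton]
      omega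
    have hsub : F ⊆ (Polynomial.derivative Q).roots.toFinset := by
      intro a ha
      exact Multiset.mem_toFinset.2 (hmemroots a ha)
    have hc1 : F.card ≤ (Polynomial.derivative Q).roots.toFinset.card := Finset.card_le_card hsub
    have hc2 := Multiset.toFinset_card_le (Polynomial.derivative Q).roots
    have hc3 := Polynomial.card_roots' (Polynomial.derivative Q)
    have hQdeg : Q.natDegree ≤ n := by
      rw [hQdef]
      refine le_trans (Polynomial.natDegree_sub_le _ _) ?_
      rw [max_le_iff]
      constructor
      · refine le_trans Polynomial.natDegree_mul_le ?_
        simp [cheb_natDegree_le n]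
      · exact hq
    have hc4 : (Polynomial.derivative Q).natDegree ≤ n - 1 :=
      le_trans (Polynomial.natDegree_derivative_le Q) (by omega)
    omega

lemma markov_core_abs (n : ℕ) (hn : 1 ≤ n) (q : Polynomial ℝ) (hq : q.natDegree ≤ n) (S : ℝ)
    (hS : ∀ x ∈ Set.Icc (-1:ℝ) 1, |q.eval x| ≤ S) :
    |(Polynomial.derivative q).eval 1| ≤ n^2 * S := by
  rw [abs_le]
  constructor
  · have := markov_core n hn (-q) (by simpa using hq) S (by intro x hx; simpa using hS x hx)
    simp only [Polynomial.derivative_neg, Polynomial.eval_neg] at this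
    linarith
  · exact markov_core n hn q hq S hS

/-- Markov at an endpoint of a general interval, via an affine map. -/
lemma markov_affine (n : ℕ) (hn : 1 ≤ n) (q : Polynomial ℝ) (hq : q.natDegree ≤ n) (S : ℝ)
    (a b : ℝ) (hab : a < b)
    (hS : ∀ x ∈ Set.Icc a b, |q.eval x| ≤ S) (s e : ℝ) (hs : s ≠ 0)
    (hmap : ∀ x ∈ Set.Icc (-1:ℝ) 1, s*x + e ∈ Set.Icc a b) :
    |(Polynomial.derivative q).eval (s + e)| ≤ n^2 * S / |s| := by
  set φ : Polynomial ℝ := Polynomial.C s * Polynomial.X + Polynomial.C e with hφ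
  have hφeval : ∀ x : ℝ, φ.eval x = s * x + e := by intro x; simp [hφ]
  set g : Polynomial ℝ := q.comp φ with hg
  have hgdeg : g.natDegree ≤ n := by
    refine le_trans (Polynomial.natDegree_comp_le) ?_
    have : φ.natDegree ≤ 1 := by
      rw [hφ]
      refine le_trans (Polynomial.natDegree_add_le _ _) ?_
      rw [max_le_iff]
      exact ⟨le_trans (Polynomial.natDegree_C_mul_le s Polynomial.X) (by simp), by simp⟩
    calc q.natDegree * φ.natDegree ≤ n * 1 := Nat.mul_le_mul hq this
    _ = n := by ring
  have hgbound : ∀ x ∈ Set.Icc (-1:ℝ) 1, |g.eval x| ≤ S := by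
    intro x hx
    rw [hg, Polynomial.eval_comp, hφeval]
    exact hS _ (hmap x hx)
  have hder := markov_core_abs n hn g hgdeg S hgbound
  have hgder : (Polynomial.derivative g).eval 1 = s * (Polynomial.derivative q).eval (s + e) := by
    rw [hg, Polynomial.derivative_comp]
    simp [hφ]
    try ring
  rw [hgder] at hder
  rw [abs_mul] at hder
  rw [le_div_iff₀ (abs_pos.2 hs)]
  calc |(Polynomial.derivative q).eval (s + e)| * |s| = |s| * |(Polynomial.derivative q).eval (s+e)| := by ring
  _ ≤ n^2 * S := hder

/-- Markov inequality on an interval. -/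
lemma markov_interval (n : ℕ) (hn : 1 ≤ n) (q : Polynomial ℝ) (hq : q.natDegree ≤ n) (S : ℝ)
    (a b : ℝ) (hab : a < b)
    (hS : ∀ x ∈ Set.Icc a b, |q.eval x| ≤ S) :
    ∀ x ∈ Set.Icc a b, |(Polynomial.derivative q).eval x| ≤ 4 * n^2 * S / (b - a) := by
  intro x₀ hx₀
  have hS0 : 0 ≤ S := le_trans (abs_nonneg _) (hS a ⟨le_refl a, le_of_lt hab⟩)
  set h : ℝ := (b - a)/2 with hh
  have hh0 : 0 < h := by rw [hh]; linarith
  rcases le_or_gt x₀ ((a+b)/2) with hc | hc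
  · -- interval [x₀, x₀ + h] ⊆ [a,b], x₀ is its left endpoint
    have key := markov_affine n hn q hq S a b hab hS (-(h/2)) (x₀ + h/2) (neg_ne_zero.2 (by positivity))
      (by intro x hx
          rw [Set.mem_Icc] at hx ⊢
          constructor
          · nlinarith [hx₀.1, hx.2]
          · nlinarith [hx₀.2, hx.1, hx.2])
    have : -(h/2) + (x₀ + h/2) = x₀ := by ring
    rw [this] at key
    have habs : |(-(h/2))| = h/2 := by rw [abs_neg, abs_of_pos (by linarith)]
    rw [habs] at key
    calc |(Polynomial.derivative q).eval x₀| ≤ n^2 * S / (h/2) := key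
    _ = 4 * n^2 * S / (b - a) := by rw [hh]; field_simp; ring
  · have key := markov_affine n hn q hq S a b hab hS (h/2) (x₀ - h/2) (by positivity)
      (by intro x hx
          rw [Set.mem_Icc] at hx ⊢
          constructor
          · nlinarith [hx₀.1, hx.1, hc]
          · nlinarith [hx₀.2, hx.2])
    have : h/2 + (x₀ - h/2) = x₀ := by ring
    rw [this] at key
    have habs : |h/2| = h/2 := abs_of_pos (by linarith)
    rw [habs] at key
    calc |(Polynomial.derivative q).eval x₀| ≤ n^2 * S / (h/2) := key
    _ = 4 * n^2 * S / (b - a) := by rw [hh]; field_simp; ring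

/-- Ehlich–Zeller: a polynomial bounded at integer points of an interval is bounded
on the whole interval. -/
lemma ez_lemma (n : ℕ) (hn : 1 ≤ n) (q : Polynomial ℝ) (hq : q.natDegree ≤ n) (B : ℝ)
    (a b : ℤ) (hab : (4*(n:ℝ)^2) ≤ (b:ℝ) - (a:ℝ))
    (hint : ∀ k : ℤ, a ≤ k → k ≤ b → |q.eval (k:ℝ)| ≤ B) :
    ∀ x : ℝ, (a:ℝ) ≤ x → x ≤ (b:ℝ) → |q.eval x| ≤ B / (1 - 2*(n:ℝ)^2/((b:ℝ)-(a:ℝ))) := by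
  have hn2 : (0:ℝ) < (n:ℝ)^2 := by
    have : (1:ℝ) ≤ (n:ℝ) := by exact_mod_cast hn
    nlinarith
  have hba : (0:ℝ) < (b:ℝ) - a := lt_of_lt_of_le (by nlinarith) hab
  have habz : (a:ℝ) < (b:ℝ) := by linarith
  have hθ : 2*(n:ℝ)^2/((b:ℝ)-(a:ℝ)) ≤ 1/2 := by
    rw [div_le_iff₀ hba]; nlinarith
  have hθ0 : 0 < 1 - 2*(n:ℝ)^2/((b:ℝ)-(a:ℝ)) := by
    have : 0 < 2*(n:ℝ)^2/((b:ℝ)-(a:ℝ)) := by positivity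
    linarith
  have hcont : ContinuousOn (fun t : ℝ => |q.eval t|) (Set.Icc (a:ℝ) (b:ℝ)) :=
    (q.continuous.abs).continuousOn
  obtain ⟨ξ, hξmem, hξmax⟩ := IsCompact.exists_isMaxOn isCompact_Icc
    (Set.nonempty_Icc.2 (le_of_lt habz)) hcont
  set S : ℝ := |q.eval ξ| with hSdef
  have hmax : ∀ y ∈ Set.Icc (a:ℝ) (b:ℝ), |q.eval y| ≤ S := fun y hy => hξmax hy
  have hM := markov_interval n hn q hq S (a:ℝ) (b:ℝ) habz hmax
  set k : ℤ := round ξ with hk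
  have hk1 : a ≤ k := by
    rw [hk, round_eq]
    refine Int.le_floor.2 ?_
    push_cast
    linarith [hξmem.1]
  have hk2 : k ≤ b := by
    rw [hk, round_eq]
    have : ⌊ξ + 1/2⌋ < b + 1 := Int.floor_lt.2 (by push_cast; linarith [hξmem.2])
    omega
  have hkmem : (k:ℝ) ∈ Set.Icc (a:ℝ) (b:ℝ) := by
    constructor
    · exact_mod_cast hk1
    · exact_mod_cast hk2
  have hmvt : ‖q.eval ξ - q.eval (k:ℝ)‖ ≤ (4 * (n:ℝ)^2 * S / ((b:ℝ)-(a:ℝ))) * ‖ξ - (k:ℝ)‖ := by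
    apply Convex.norm_image_sub_le_of_norm_hasDerivWithin_le
      (f' := fun t : ℝ => (Polynomial.derivative q).eval t)
      (fun x _ => (Polynomial.hasDerivAt q x).hasDerivWithinAt)
      (fun x hx => by simpa using hM x hx) (convex_Icc _ _) hkmem hξmem
  have hround : |ξ - (k:ℝ)| ≤ 1/2 := by
    rw [hk]
    exact abs_sub_round ξ
  have hSbound : S * (1 - 2*(n:ℝ)^2/((b:ℝ)-(a:ℝ))) ≤ B := by
    have hSnn : 0 ≤ S := abs_nonneg _
    have hCnn : 0 ≤ 4 * (n:ℝ)^2 * S / ((b:ℝ)-(a:ℝ)) := by positivity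
    have h1 : S ≤ |q.eval (k:ℝ)| + |q.eval ξ - q.eval (k:ℝ)| := by
      rw [hSdef]
      have := abs_add_le (q.eval ξ - q.eval (k:ℝ)) (q.eval (k:ℝ))
      simp only [sub_add_cancel] at this
      linarith
    have h2 : |q.eval ξ - q.eval (k:ℝ)| ≤ (4 * (n:ℝ)^2 * S / ((b:ℝ)-(a:ℝ))) * (1/2) := by
      calc |q.eval ξ - q.eval (k:ℝ)| ≤ (4 * (n:ℝ)^2 * S / ((b:ℝ)-(a:ℝ))) * |ξ - (k:ℝ)| := hmvt
      _ ≤ (4 * (n:ℝ)^2 * S / ((b:ℝ)-(a:ℝ))) * (1/2) := by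
          apply mul_le_mul_of_nonneg_left hround hCnn
    have h3 := hint k hk1 hk2
    have h4 : (4 * (n:ℝ)^2 * S / ((b:ℝ)-(a:ℝ))) * (1/2) = S * (2*(n:ℝ)^2/((b:ℝ)-(a:ℝ))) := by
      field_simp
      ring
    rw [h4] at h2
    nlinarith
  intro x hx1 hx2
  rw [le_div_iff₀ hθ0]
  have := hmax x ⟨hx1, hx2⟩
  nlinarith

/-- Taylor-extension bound: a polynomial bounded on a long interval is bounded
slightly to the left of the interval. -/
lemma decay_bound (n : ℕ) (hn : 1 ≤ n) (r : Polynomial ℝ) (hr : r.natDegree ≤ n) (M : ℝ)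
    (α β : ℝ) (hαβ : α < β) (hM : ∀ x ∈ Set.Icc α β, |r.eval x| ≤ M)
    (hL : 8*(n:ℝ)^2 ≤ β - α) :
    |r.eval (α - 1/2)| ≤ (4/3) * M := by
  have hM0 : 0 ≤ M := le_trans (abs_nonneg _) (hM α ⟨le_refl _, le_of_lt hαβ⟩)
  have hn2 : (0:ℝ) < (n:ℝ)^2 := by
    have : (1:ℝ) ≤ (n:ℝ) := by exact_mod_cast hn
    nlinarith
  set κ : ℝ := 4*(n:ℝ)^2/(β - α) with hκ
  have hβα : (0:ℝ) < β - α := by linarith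
  have hκ0 : 0 ≤ κ := by positivity
  have hκhalf : κ ≤ 1/2 := by
    rw [hκ, div_le_iff₀ hβα]; nlinarith
  have hiter : ∀ j, ∀ x ∈ Set.Icc α β, |((Polynomial.derivative)^[j] r).eval x| ≤ κ^j * M := by
    intro j
    induction j with
    | zero => simpa using hM
    | succ j ih =>
      intro x hx
      have hdeg : ((Polynomial.derivative)^[j] r).natDegree ≤ n :=
        le_trans (Polynomial.natDegree_iterate_derivative _ _) (by omega)
      have := markov_interval n hn _ hdeg (κ^j * M) α β hαβ ih x hx
      rw [Function.iterate_succ_apply']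
      refine le_trans this (le_of_eq ?_)
      rw [hκ, pow_succ]
      ring
  set ft : Polynomial ℝ := Polynomial.taylor α r with hft
  have hcoef : ∀ i, |ft.coeff i| ≤ κ^i * M := by
    intro i
    rw [hft, Polynomial.taylor_coeff]
    have hfact := congrFun (Polynomial.factorial_smul_hasseDeriv (R := ℝ) i) r
    simp only [LinearMap.smul_apply] at hfact
    have heval : (Nat.factorial i : ℝ) * (Polynomial.hasseDeriv i r).eval α
        = ((Polynomial.derivative)^[i] r).eval α := by
      rw [← hfact]
      rw [Polynomial.eval_smul]
      simp [nsmul_eq_mul]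
    have h1 : |((Polynomial.derivative)^[i] r).eval α| ≤ κ^i * M :=
      hiter i α ⟨le_refl _, le_of_lt hαβ⟩
    have hfac1 : (1:ℝ) ≤ (Nat.factorial i : ℝ) := by exact_mod_cast Nat.one_le_iff_ne_zero.2 (Nat.factorial_ne_zero i)
    have habs : |(Polynomial.hasseDeriv i r).eval α| * (Nat.factorial i : ℝ) = |((Polynomial.derivative)^[i] r).eval α| := by
      rw [← heval, abs_mul, abs_of_nonneg (by positivity : (0:ℝ) ≤ (Nat.factorial i : ℝ))]
      ring
    nlinarith [abs_nonneg ((Polynomial.hasseDeriv i r).eval α)]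
  have h0 : r.eval (α - 1/2) = ∑ i ∈ ft.support, ft.coeff i * (-(1/2):ℝ)^i := by
    conv_lhs => rw [← Polynomial.sum_taylor_eq r α]
    rw [Polynomial.sum, Polynomial.eval_finset_sum]
    refine Finset.sum_congr rfl ?_
    intro i _
    simp only [Polynomial.eval_mul, Polynomial.eval_pow, Polynomial.eval_sub, Polynomial.eval_X,
      Polynomial.eval_C]
    norm_num
    rfl
  have hsubset : ft.support ⊆ Finset.range (n+1) := by
    intro i hi
    have := Polynomial.le_natDegree_of_mem_supp i hi
    have h2 : ft.natDegree = r.natDegree := Polynomial.natDegree_taylor r α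
    rw [Finset.mem_range]
    omega
  have hb : |r.eval (α - 1/2)| ≤ ∑ i ∈ Finset.range (n+1), ((1:ℝ)/4)^i * M := by
    rw [h0]
    refine le_trans (Finset.abs_sum_le_sum_abs _ _) ?_
    refine le_trans (Finset.sum_le_sum_of_subset_of_nonneg hsubset
      (fun i _ _ => abs_nonneg _)) ?_
    refine Finset.sum_le_sum ?_
    intro i _
    rw [abs_mul, abs_pow]
    have h2 : |(-(1/2):ℝ)| = 1/2 := by norm_num
    rw [h2]
    calc |ft.coeff i| * (1/2)^i ≤ (κ^i * M) * (1/2)^i := by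
          apply mul_le_mul_of_nonneg_right (hcoef i) (by positivity)
    _ ≤ ((1/2:ℝ)^i * M) * (1/2)^i := by
          apply mul_le_mul_of_nonneg_right ?_ (by positivity)
          apply mul_le_mul_of_nonneg_right ?_ hM0
          exact pow_le_pow_left₀ hκ0 hκhalf i
    _ = ((1:ℝ)/4)^i * M := by
          rw [show ((1:ℝ)/4) = (1/2) * (1/2) by norm_num, mul_pow]
          ring
  have hgeo : ∑ i ∈ Finset.range (n+1), ((1:ℝ)/4)^i ≤ 4/3 := by
    rw [geom_sum_eq (by norm_num : ((1:ℝ)/4) ≠ 1)]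
    rw [div_le_iff_of_neg (by norm_num : ((1:ℝ)/4) - 1 < 0)]
    have : (0:ℝ) ≤ (1/4:ℝ)^(n+1) := by positivity
    nlinarith
  refine le_trans hb ?_
  rw [← Finset.sum_mul]
  exact mul_le_mul_of_nonneg_right hgeo hM0

open MvPolynomial in
/-- Restriction of a bivariate polynomial to a horizontal line. -/
lemma restrict_x (P : MvPolynomial (Fin 2) ℝ) (y₀ : ℝ) :
    ∃ q : Polynomial ℝ, q.natDegree ≤ P.totalDegree ∧
      ∀ x : ℝ, q.eval x = MvPolynomial.eval ![x, y₀] P := by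
  refine ⟨∑ m ∈ P.support, Polynomial.C (P.coeff m * y₀ ^ (m 1)) * Polynomial.X ^ (m 0), ?_, ?_⟩
  · refine Polynomial.natDegree_sum_le_of_forall_le _ _ ?_
    intro m hm
    refine le_trans (Polynomial.natDegree_mul_le) ?_
    have h1 : m 0 ≤ m.sum fun _ e => e := by
      rw [Finsupp.sum_fintype _ _ (fun _ => rfl), Fin.sum_univ_two]
      omega
    have h2 := MvPolynomial.le_totalDegree hm
    simp only [Polynomial.natDegree_C, Polynomial.natDegree_X_pow]
    omega
  · intro x
    rw [Polynomial.eval_finset_sum, MvPolynomial.eval_eq']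
    refine Finset.sum_congr rfl ?_
    intro m _
    rw [Fin.prod_univ_two]
    simp only [Polynomial.eval_mul, Polynomial.eval_C, Polynomial.eval_pow, Polynomial.eval_X,
      Matrix.cons_val_zero, Matrix.cons_val_one, Matrix.head_cons]
    ring

open MvPolynomial in
/-- Restriction of a bivariate polynomial to a vertical line. -/
lemma restrict_y (P : MvPolynomial (Fin 2) ℝ) (x₀ : ℝ) :
    ∃ q : Polynomial ℝ, q.natDegree ≤ P.totalDegree ∧
      ∀ y : ℝ, q.eval y = MvPolynomial.eval ![x₀, y] P := by
  refine ⟨∑ m ∈ P.support, Polynomial.C (P.coeff m * x₀ ^ (m 0)) * Polynomial.X ^ (m 1), ?_, ?_⟩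
  · refine Polynomial.natDegree_sum_le_of_forall_le _ _ ?_
    intro m hm
    refine le_trans (Polynomial.natDegree_mul_le) ?_
    have h1 : m 1 ≤ m.sum fun _ e => e := by
      rw [Finsupp.sum_fintype _ _ (fun _ => rfl), Fin.sum_univ_two]
      omega
    have h2 := MvPolynomial.le_totalDegree hm
    simp only [Polynomial.natDegree_C, Polynomial.natDegree_X_pow]
    omega
  · intro y
    rw [Polynomial.eval_finset_sum, MvPolynomial.eval_eq']
    refine Finset.sum_congr rfl ?_
    intro m _
    rw [Fin.prod_univ_two]
    simp only [Polynomial.eval_mul, Polynomial.eval_C, Polynomial.eval_pow, Polynomial.eval_X,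
      Matrix.cons_val_zero, Matrix.cons_val_one, Matrix.head_cons]
    ring

/-- Bound on a real rectangle from bounds at its integer points. -/
lemma rect_bound (n : ℕ) (hn : 1 ≤ n) (P : MvPolynomial (Fin 2) ℝ) (hdeg : P.totalDegree ≤ n)
    (A B C D : ℤ)
    (h1 : (4*(n:ℝ)^2) ≤ (B:ℝ) - (A:ℝ)) (h2 : (4*(n:ℝ)^2) ≤ (D:ℝ) - (C:ℝ))
    (hb : ∀ x y : ℤ, A ≤ x → x ≤ B → C ≤ y → y ≤ D →
      |MvPolynomial.eval ![(x:ℝ), (y:ℝ)] P| ≤ 1) :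
    ∀ x y : ℝ, (A:ℝ) ≤ x → x ≤ (B:ℝ) → (C:ℝ) ≤ y → y ≤ (D:ℝ) →
      |MvPolynomial.eval ![x, y] P| ≤
        (1 / (1 - 2*(n:ℝ)^2/((D:ℝ)-(C:ℝ)))) / (1 - 2*(n:ℝ)^2/((B:ℝ)-(A:ℝ))) := by
  intro x y hx1 hx2 hy1 hy2
  -- Step 1: bound at (integer x, real y)
  have step1 : ∀ k : ℤ, A ≤ k → k ≤ B → ∀ z : ℝ, (C:ℝ) ≤ z → z ≤ (D:ℝ) →
      |MvPolynomial.eval ![(k:ℝ), z] P| ≤ 1 / (1 - 2*(n:ℝ)^2/((D:ℝ)-(C:ℝ))) := by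
    intro k hk1 hk2 z hz1 hz2
    obtain ⟨q, hq1, hq2⟩ := restrict_y P (k:ℝ)
    have := ez_lemma n hn q (le_trans hq1 hdeg) 1 C D h2
      (fun j hj1 hj2 => by rw [hq2]; exact hb k j hk1 hk2 hj1 hj2) z hz1 hz2
    rw [hq2] at this
    exact this
  -- Step 2: bound at (real x, real y)
  obtain ⟨q, hq1, hq2⟩ := restrict_x P y
  have := ez_lemma n hn q (le_trans hq1 hdeg) (1 / (1 - 2*(n:ℝ)^2/((D:ℝ)-(C:ℝ)))) A B h1
    (fun k hk1 hk2 => by rw [hq2]; exact step1 k hk1 hk2 y hy1 hy2) x hx1 hx2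
  rw [hq2] at this
  exact this

noncomputable def hpol : ℕ → Polynomial ℝ
  | 0 => 2
  | 1 => Polynomial.X
  | k + 2 => Polynomial.X * hpol (k+1) - hpol k

lemma hpol_natDegree_le (k : ℕ) : (hpol k).natDegree ≤ k := by
  induction k using hpol.induct with
  | case1 => simp [hpol]
  | case2 => simp [hpol]
  | case3 k ih1 ih2 =>
    show (Polynomial.X * hpol (k+1) - hpol k).natDegree ≤ k + 2
    refine le_trans (Polynomial.natDegree_sub_le _ _) ?_
    rw [max_le_iff]
    constructor
    · refine le_trans (Polynomial.natDegree_mul_le) ?_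
      simp only [Polynomial.natDegree_X]
      omega
    · omega

lemma hpol_eval (k : ℕ) (t : ℝ) (ht : t ≠ 0) :
    (hpol k).eval (t + t⁻¹) = t^k + (t⁻¹)^k := by
  induction k using hpol.induct with
  | case1 => simp [hpol]; norm_num
  | case2 => simp [hpol]
  | case3 k ih1 ih2 =>
    show (Polynomial.X * hpol (k+1) - hpol k).eval (t + t⁻¹) = _
    rw [Polynomial.eval_sub, Polynomial.eval_mul, Polynomial.eval_X, ih1, ih2]
    have h1 : t * t⁻¹ = 1 := mul_inv_cancel₀ ht
    show _ = t^(k+2) + t⁻¹^(k+2)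
    linear_combination (t⁻¹^k + t^k) * h1

/-- The symmetrised restriction of a bivariate polynomial to a hyperbola,
as a univariate polynomial in `s = t + 1/t`. -/
noncomputable def rpoly (P : MvPolynomial (Fin 2) ℝ) (c : ℝ) : Polynomial ℝ :=
  ∑ m ∈ P.support, Polynomial.C (P.coeff m * c ^ (m 0 + m 1)) * hpol ((m 0 - m 1) + (m 1 - m 0))

lemma rpoly_natDegree_le (P : MvPolynomial (Fin 2) ℝ) (c : ℝ) :
    (rpoly P c).natDegree ≤ P.totalDegree := by
  refine Polynomial.natDegree_sum_le_of_forall_le _ _ ?_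
  intro m hm
  refine le_trans (Polynomial.natDegree_mul_le) ?_
  have h1 := hpol_natDegree_le ((m 0 - m 1) + (m 1 - m 0))
  have h2 := MvPolynomial.le_totalDegree hm
  have h3 : (m.sum fun _ e => e) = m 0 + m 1 := by
    rw [Finsupp.sum_fintype _ _ (fun _ => rfl), Fin.sum_univ_two]
  simp only [Polynomial.natDegree_C]
  omega

lemma rpoly_eval (P : MvPolynomial (Fin 2) ℝ) (c : ℝ) (t : ℝ) (ht : t ≠ 0) :
    (rpoly P c).eval (t + t⁻¹) =
      MvPolynomial.eval ![c*t, c*t⁻¹] P + MvPolynomial.eval ![c*t⁻¹, c*t] P := by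
  rw [rpoly, Polynomial.eval_finset_sum]
  rw [MvPolynomial.eval_eq', MvPolynomial.eval_eq', ← Finset.sum_add_distrib]
  refine Finset.sum_congr rfl ?_
  intro m _
  rw [Fin.prod_univ_two, Fin.prod_univ_two]
  simp only [Polynomial.eval_mul, Polynomial.eval_C, Matrix.cons_val_zero, Matrix.cons_val_one,
    Matrix.head_cons]
  rw [hpol_eval _ t ht]
  set i := m 0
  set j := m 1
  have key : t^(i - j + (j - i)) + (t⁻¹)^(i - j + (j - i)) = t^i * (t⁻¹)^j + (t⁻¹)^i * t^j := by
    have e : t^(min i j) * (t⁻¹)^(min i j) = 1 := by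
      rw [← mul_pow, mul_inv_cancel₀ ht, one_pow]
    rcases le_total j i with h | h
    · have hij : i - j + (j - i) = i - j := by omega
      have hi : t ^ i = t ^ (i - j) * t ^ j := by rw [← pow_add]; congr 1; omega
      have hi' : (t⁻¹) ^ i = (t⁻¹) ^ (i - j) * (t⁻¹) ^ j := by rw [← pow_add]; congr 1; omega
      have e' : t^j * (t⁻¹)^j = 1 := by rw [← mul_pow, mul_inv_cancel₀ ht, one_pow]
      rw [hij, hi, hi']
      calc t ^ (i-j) + (t⁻¹)^(i-j)
          = t^(i-j) * (t^j * (t⁻¹)^j) + (t⁻¹)^(i-j) * ((t⁻¹)^j * t^j) := by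
            rw [e']
            have : (t⁻¹)^j * t^j = 1 := by rw [← mul_pow, inv_mul_cancel₀ ht, one_pow]
            rw [this]
            ring
      _ = t ^ (i - j) * t ^ j * (t⁻¹) ^ j + (t⁻¹) ^ (i - j) * (t⁻¹) ^ j * t ^ j := by ring
    · have hij : i - j + (j - i) = j - i := by omega
      have hj : t ^ j = t ^ (j - i) * t ^ i := by rw [← pow_add]; congr 1; omega
      have hj' : (t⁻¹) ^ j = (t⁻¹) ^ (j - i) * (t⁻¹) ^ i := by rw [← pow_add]; congr 1; omega
      have e' : t^i * (t⁻¹)^i = 1 := by rw [← mul_pow, mul_inv_cancel₀ ht, one_pow]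
      rw [hij, hj, hj']
      have e2 : (t⁻¹)^i * t^i = 1 := by rw [← mul_pow, inv_mul_cancel₀ ht, one_pow]
      calc t ^ (j-i) + (t⁻¹)^(j-i)
          = t^i * (t⁻¹)^i * t^(j-i) + (t⁻¹)^i * t^i * (t⁻¹)^(j-i) := by rw [e', e2]; ring
      _ = t ^ i * ((t⁻¹) ^ (j-i) * (t⁻¹) ^ i) + (t⁻¹) ^ i * (t ^ (j-i) * t ^ i) := by ring
  rw [key]
  rw [mul_pow, mul_pow, mul_pow, mul_pow, pow_add]
  ring

set_option maxHeartbeats 1000000 in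
/-- **Main degree lower bound (Theorem 3.1).** There is an absolute constant `c > 0`
such that: for positive integers `w, N` with `2w ≤ N ≤ 4w³`, and any real bivariate
polynomial `p` of total degree `d` with `p(2w, 2w) ≥ 2` and `0 ≤ p(x, y) ≤ 1` at all
integer points of `([2w,N] × [0,w]) ∪ ([0,w] × [2w,N])`, we have
`d ≥ c · min(sqrt w, sqrt(N/w))`. -/
theorem main_degree_lower_bound :
    ∃ c : ℝ, 0 < c ∧
      ∀ (w N : ℤ) (p : MvPolynomial (Fin 2) ℝ),
        0 < w → 2 * w ≤ N → N ≤ 4 * w ^ 3 →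
        MvPolynomial.eval ![2 * (w : ℝ), 2 * (w : ℝ)] p ≥ 2 →
        (∀ x y : ℤ,
          ((2 * w ≤ x ∧ x ≤ N ∧ 0 ≤ y ∧ y ≤ w) ∨
           (0 ≤ x ∧ x ≤ w ∧ 2 * w ≤ y ∧ y ≤ N)) →
          0 ≤ MvPolynomial.eval ![(x : ℝ), (y : ℝ)] p ∧
            MvPolynomial.eval ![(x : ℝ), (y : ℝ)] p ≤ 1) →
        (p.totalDegree : ℝ) ≥
          c * min (Real.sqrt w) (Real.sqrt ((N : ℝ) / w)) := by
  refine ⟨1/100, by norm_num, ?_⟩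
  intro w N p hw h2w hN3 hval hbox
  set d : ℕ := p.totalDegree with hd
  have hw1 : (1:ℝ) ≤ (w:ℝ) := by exact_mod_cast hw
  have hNR : 2*(w:ℝ) ≤ (N:ℝ) := by exact_mod_cast h2w
  -- the box bound at (2w, 0)
  have hbx0 : 0 ≤ MvPolynomial.eval ![((2*w : ℤ):ℝ), ((0:ℤ):ℝ)] p ∧
      MvPolynomial.eval ![((2*w : ℤ):ℝ), ((0:ℤ):ℝ)] p ≤ 1 :=
    hbox (2*w) 0 (Or.inl ⟨le_refl _, h2w, le_refl 0, le_of_lt hw⟩)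
  have hc0 : ((2*w : ℤ):ℝ) = 2*(w:ℝ) := by push_cast; ring
  have hc1 : ((0 : ℤ):ℝ) = (0:ℝ) := by norm_num
  rw [hc0, hc1] at hbx0
  -- degree at least 1
  have hd1 : 1 ≤ d := by
    by_contra hcon
    push_neg at hcon
    have hd0 : p.totalDegree = 0 := by omega
    obtain ⟨q, hq1, hq2⟩ := restrict_y p (2*(w:ℝ))
    have hcc : q = Polynomial.C (q.coeff 0) := Polynomial.eq_C_of_natDegree_le_zero (by omega)
    have e1 : MvPolynomial.eval ![2*(w:ℝ), 2*(w:ℝ)] p = MvPolynomial.eval ![2*(w:ℝ), 0] p := by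
      rw [← hq2, ← hq2, hcc]
      simp
    rw [e1] at hval
    linarith [hbx0.2]
  have hdR1 : (1:ℝ) ≤ (d:ℝ) := by exact_mod_cast hd1
  by_contra hcon
  push_neg at hcon
  -- extract the size bounds
  have hsw : 100*(d:ℝ) < Real.sqrt w := by
    have h1 : (d:ℝ) < 1/100 * Real.sqrt w := lt_of_lt_of_le hcon
      (mul_le_mul_of_nonneg_left (min_le_left _ _) (by norm_num))
    linarith
  have hsN : 100*(d:ℝ) < Real.sqrt ((N:ℝ)/w) := by
    have h1 : (d:ℝ) < 1/100 * Real.sqrt ((N:ℝ)/w) := lt_of_lt_of_le hcon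
      (mul_le_mul_of_nonneg_left (min_le_right _ _) (by norm_num))
    linarith
  have hwd : 10000*(d:ℝ)^2 < (w:ℝ) := by
    have := (Real.lt_sqrt (by positivity)).1 hsw
    nlinarith
  have hNwd : 10000*(d:ℝ)^2 < (N:ℝ)/w := by
    have := (Real.lt_sqrt (by positivity)).1 hsN
    nlinarith
  have hwpos : (0:ℝ) < w := by linarith
  have hNd : 10000*(d:ℝ)^2 * w < (N:ℝ) := by
    rw [lt_div_iff₀ hwpos] at hNwd
    nlinarith
  have hd2 : (1:ℝ) ≤ (d:ℝ)^2 := by nlinarith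
  have hNbig : 10000 * (w:ℝ) < N := by nlinarith
  have hN2w : (N:ℝ)/2 ≤ (N:ℝ) - 2*w := by nlinarith
  have hNpos : (0:ℝ) < N := by nlinarith
  -- rectangle bounds
  have hprod : 10000*(d:ℝ)^2 * 1 ≤ 10000*(d:ℝ)^2 * w :=
    mul_le_mul_of_nonneg_left hw1 (by positivity)
  have hNd' : 10000*(d:ℝ)^2 ≤ (N:ℝ) := by linarith
  have hcond1 : (4*(d:ℝ)^2) ≤ (N:ℝ) - ((2*w:ℤ):ℝ) := by
    rw [hc0]
    linarith
  have hcond2 : (4*(d:ℝ)^2) ≤ (w:ℝ) - ((0:ℤ):ℝ) := by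
    rw [hc1]
    linarith
  have hbint1 : ∀ x y : ℤ, 2*w ≤ x → x ≤ N → 0 ≤ y → y ≤ w →
      |MvPolynomial.eval ![(x:ℝ), (y:ℝ)] p| ≤ 1 := by
    intro x y h1 h2 h3 h4
    have := hbox x y (Or.inl ⟨h1, h2, h3, h4⟩)
    rw [abs_le]
    exact ⟨by linarith [this.1], this.2⟩
  have hbint2 : ∀ x y : ℤ, 0 ≤ x → x ≤ w → 2*w ≤ y → y ≤ N →
      |MvPolynomial.eval ![(x:ℝ), (y:ℝ)] p| ≤ 1 := by
    intro x y h1 h2 h3 h4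
    have := hbox x y (Or.inr ⟨h1, h2, h3, h4⟩)
    rw [abs_le]
    exact ⟨by linarith [this.1], this.2⟩
  have R1 := rect_bound d hd1 p (le_refl d) (2*w) N 0 w hcond1 hcond2 hbint1
  have R2 := rect_bound d hd1 p (le_refl d) 0 w (2*w) N hcond2 hcond1 hbint2
  -- numeric bound on the rectangle constants
  have hθ1 : 2*(d:ℝ)^2/((N:ℝ) - ((2*w:ℤ):ℝ)) ≤ 1/100 := by
    rw [hc0, div_le_iff₀ (by linarith)]
    linarith
  have hθ2 : 2*(d:ℝ)^2/((w:ℝ) - ((0:ℤ):ℝ)) ≤ 1/100 := by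
    rw [hc1, div_le_iff₀ (by linarith)]
    linarith
  -- the rectangle constant is at most 26/25
  have hconst : ∀ a b : ℝ, 0 ≤ a → a ≤ 1/100 → 0 ≤ b → b ≤ 1/100 →
      (1 / (1 - a)) / (1 - b) ≤ 26/25 := by
    intro a b ha1 ha2 hb1 hb2
    have h1 : (99/100 : ℝ) ≤ 1 - a := by linarith
    have h2 : (99/100 : ℝ) ≤ 1 - b := by linarith
    have h3 : 1/(1-a) ≤ 100/99 := by
      rw [div_le_div_iff₀ (by linarith) (by norm_num)]
      linarith
    calc (1 / (1 - a)) / (1 - b) ≤ (100/99) / (99/100) := by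
          apply div_le_div₀ (by norm_num) h3 (by linarith) h2
    _ ≤ 26/25 := by norm_num
  have hE1 : ∀ x y : ℝ, 2*(w:ℝ) ≤ x → x ≤ (N:ℝ) → 0 ≤ y → y ≤ (w:ℝ) →
      |MvPolynomial.eval ![x, y] p| ≤ 26/25 := by
    intro x y h1 h2 h3 h4
    have := R1 x y (by rw [hc0]; exact h1) h2 (by rw [hc1]; exact h3) h4
    refine le_trans this ?_
    apply hconst
    · exact div_nonneg (by positivity) (by rw [hc1]; linarith)
    · exact hθ2
    · exact div_nonneg (by positivity) (by rw [hc0]; linarith)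
    · exact hθ1
  have hE2 : ∀ x y : ℝ, 0 ≤ x → x ≤ (w:ℝ) → 2*(w:ℝ) ≤ y → y ≤ (N:ℝ) →
      |MvPolynomial.eval ![x, y] p| ≤ 26/25 := by
    intro x y h1 h2 h3 h4
    have := R2 x y (by rw [hc1]; exact h1) h2 (by rw [hc0]; exact h3) h4
    refine le_trans this ?_
    apply hconst
    · exact div_nonneg (by positivity) (by rw [hc0]; linarith)
    · exact hθ1
    · exact div_nonneg (by positivity) (by rw [hc1]; linarith)
    · exact hθ2
  -- the hyperbola restriction
  set c2 : ℝ := 2*(w:ℝ) with hc2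
  set r : Polynomial ℝ := rpoly p c2 with hr
  set τ : ℝ := 8*(d:ℝ)^2 + 3 with hτ
  have hτ11 : (11:ℝ) ≤ τ := by rw [hτ]; linarith
  have hτ2 : (2:ℝ) ≤ τ := by linarith
  have hτpos : (0:ℝ) < τ := by linarith
  have hτinv0 : (0:ℝ) ≤ τ⁻¹ := inv_nonneg.2 (by linarith)
  have hτN : 2*(w:ℝ)*τ ≤ N := by
    have he : 2*(w:ℝ)*τ = 16*((d:ℝ)^2*(w:ℝ)) + 6*w := by rw [hτ]; ring
    rw [he]
    have h1 : 10000*((d:ℝ)^2*(w:ℝ)) < N := by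
      have := hNd
      linarith [hNd]
    linarith [hNbig]
  set α : ℝ := 5/2 with hα
  set β : ℝ := τ + τ⁻¹ with hβ
  have hαβ : α < β := by rw [hα, hβ]; linarith
  have hL : 8*(d:ℝ)^2 ≤ β - α := by rw [hα, hβ, hτ]; linarith
  -- bound for r on [α, β]
  have hM : ∀ s ∈ Set.Icc α β, |r.eval s| ≤ 52/25 := by
    intro s hs
    have hcont : ContinuousOn (fun t : ℝ => t + t⁻¹) (Set.Icc 2 τ) := by
      refine ContinuousOn.add continuous_id.continuousOn ?_
      exact ContinuousOn.inv₀ continuous_id.continuousOn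
        (fun x hx => ne_of_gt (by have := hx.1; show (0:ℝ) < x; linarith))
    have himg := intermediate_value_Icc hτ2 hcont
    have hs' : s ∈ Set.Icc ((fun t : ℝ => t + t⁻¹) 2) ((fun t : ℝ => t + t⁻¹) τ) := by
      simp only []
      constructor
      · have : (2:ℝ) + 2⁻¹ = 5/2 := by norm_num
        rw [this]
        exact hs.1
      · exact hs.2
    obtain ⟨t, ht, hts⟩ := himg hs'
    have ht2 : (2:ℝ) ≤ t := ht.1
    have htτ : t ≤ τ := ht.2
    have ht0 : t ≠ 0 := ne_of_gt (by linarith)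
    have htinv : t⁻¹ ≤ 1/2 := by
      have := inv_anti₀ (by norm_num : (0:ℝ) < 2) ht2
      simpa using this
    have htinv0 : (0:ℝ) ≤ t⁻¹ := inv_nonneg.2 (by linarith)
    have hkey : r.eval s = MvPolynomial.eval ![c2*t, c2*t⁻¹] p
        + MvPolynomial.eval ![c2*t⁻¹, c2*t] p := by
      rw [← hts, hr, rpoly_eval p c2 t ht0]
    rw [hkey]
    have hx1 : 2*(w:ℝ) ≤ c2*t := by rw [hc2]; nlinarith
    have hx2 : c2*t ≤ (N:ℝ) := by
      rw [hc2]
      calc 2*(w:ℝ)*t ≤ 2*(w:ℝ)*τ := by nlinarith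
      _ ≤ N := hτN
    have hy1 : (0:ℝ) ≤ c2*t⁻¹ := by rw [hc2]; positivity
    have hy2 : c2*t⁻¹ ≤ (w:ℝ) := by rw [hc2]; nlinarith
    have hA := hE1 (c2*t) (c2*t⁻¹) hx1 hx2 hy1 hy2
    have hB := hE2 (c2*t⁻¹) (c2*t) hy1 hy2 hx1 hx2
    calc |MvPolynomial.eval ![c2*t, c2*t⁻¹] p + MvPolynomial.eval ![c2*t⁻¹, c2*t] p|
        ≤ |MvPolynomial.eval ![c2*t, c2*t⁻¹] p| + |MvPolynomial.eval ![c2*t⁻¹, c2*t] p| :=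
          abs_add_le _ _
    _ ≤ 26/25 + 26/25 := add_le_add hA hB
    _ = 52/25 := by norm_num
  -- value of r at 2
  have hval2 : r.eval 2 = 2 * MvPolynomial.eval ![2*(w:ℝ), 2*(w:ℝ)] p := by
    have h1 : ((1:ℝ) + 1⁻¹) = 2 := by norm_num
    have := rpoly_eval p c2 1 one_ne_zero
    rw [h1] at this
    rw [hr, this, hc2]
    norm_num
    ring
  have hrdeg : r.natDegree ≤ d := by
    rw [hr, hd]
    exact rpoly_natDegree_le p c2
  have hdecay := decay_bound d hd1 r hrdeg (52/25) α β hαβ hM hL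
  have hα2 : α - 1/2 = 2 := by rw [hα]; norm_num
  rw [hα2] at hdecay
  have h4 : (4:ℝ) ≤ r.eval 2 := by rw [hval2]; linarith [hval]
  have habs : r.eval 2 ≤ |r.eval 2| := le_abs_self _
  linarith
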